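/- Let u < 0 and set d = E(u) - u, where E is the inverse Mills ratio. Suppose that H(u) := u²·d + 6u·d² + 6d³ - u - 4d = 0. Set r = -u/d. Then r ∈ (0, 1), d² = (4 - r)/(r² - 6r + 6), and g(u) = r·(4 - r)·(1 - r)² / (r² - 6r + 6)², where g(u) = E(u)²·(3·E(u)² - 4·u·E(u) + u² - 2). -/

import Mathlib

open MeasureTheory Real Filter

/-- The standard normal density. -/
noncomputable def gphi (u : ℝ) : ℝ := Real.exp (-u ^ 2 / 2) / Real.sqrt (2 * Real.pi)

/-- The standard normal CDF. -/
noncomputable def gPhi (u : ℝ) : ℝ := ∫ s in Set.Iic u, gphi s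

/-- The standard normal tail. -/
noncomputable def gPhiBar (u : ℝ) : ℝ := 1 - gPhi u

/-- The inverse Mills ratio. -/
noncomputable def mills (u : ℝ) : ℝ := gphi u / gPhiBar u

/-- P(r) = E[tanh²(√r Z)]. -/
noncomputable def Pfun (r : ℝ) : ℝ := ∫ z : ℝ, Real.tanh (Real.sqrt r * z) ^ 2 * gphi z

/-- B(q). -/
noncomputable def Bfun (κ q : ℝ) : ℝ :=
  (1 - q) * ∫ z : ℝ, mills ((κ - Real.sqrt q * z) / Real.sqrt (1 - q)) ^ 2 * gphi z

/-- C_κ. -/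
noncomputable def Ckappa (κ : ℝ) : ℝ := ∫ z : ℝ, max (κ - z) 0 ^ 2 * gphi z

/-- The critical capacity. -/
noncomputable def alphac (κ : ℝ) : ℝ := 2 / (Real.pi * Ckappa κ)


lemma gphi_pos (u : ℝ) : 0 < gphi u := by
  unfold gphi
  positivity

lemma gphi_integrable : Integrable gphi := by
  have h : Integrable (fun x : ℝ => Real.exp (-(1/2) * x ^ 2)) := integrable_exp_neg_mul_sq (by norm_num)
  have : gphi = fun x => Real.exp (-(1/2) * x^2) * (Real.sqrt (2 * Real.pi))⁻¹ := by
    funext x; unfold gphi; rw [div_eq_mul_inv]; ring_nf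
  rw [this]
  exact h.mul_const _

lemma gphi_integral : ∫ x : ℝ, gphi x = 1 := by
  have h := integral_gaussian (1/2)
  unfold gphi
  rw [integral_div]
  have : (fun x : ℝ => Real.exp (-x^2/2)) = fun x : ℝ => Real.exp (-(1/2) * x^2) := by
    funext x; ring_nf
  rw [this, h]
  rw [div_eq_one_iff_eq (by positivity)]
  rw [show Real.pi / (1/2 : ℝ) = 2 * Real.pi by ring]

lemma gPhiBar_pos (u : ℝ) : 0 < gPhiBar u := by
  have hsplit := intervalIntegral.integral_Iic_add_Ioi (b := u) (μ := volume) gphi_integrable.integrableOn gphi_integrable.integrableOn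
  rw [gphi_integral] at hsplit
  have hpos : 0 < ∫ x in Set.Ioi u, gphi x := by
    rw [setIntegral_pos_iff_support_of_nonneg_ae]
    · have : Function.support gphi ∩ Set.Ioi u = Set.Ioi u := by
        apply Set.inter_eq_self_of_subset_right
        intro x _
        exact (gphi_pos x).ne'
      rw [this]
      simp
    · filter_upwards with x using (gphi_pos x).le
    · exact gphi_integrable.integrableOn
  unfold gPhiBar gPhi
  linarith

lemma mills_pos (u : ℝ) : 0 < mills u := div_pos (gphi_pos u) (gPhiBar_pos u)



/-- g(u) = E(u)²(3E(u)² - 4uE(u) + u² - 2). -/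
noncomputable def gfun (u : ℝ) : ℝ :=
  mills u ^ 2 * (3 * mills u ^ 2 - 4 * u * mills u + u ^ 2 - 2)

theorem stmt_17 (u : ℝ) (hu : u < 0)
    (hH : u ^ 2 * (mills u - u) + 6 * u * (mills u - u) ^ 2
        + 6 * (mills u - u) ^ 3 - u - 4 * (mills u - u) = 0) :
    (-u / (mills u - u)) ∈ Set.Ioo (0 : ℝ) 1 ∧
    (mills u - u) ^ 2
      = (4 - (-u / (mills u - u)))
        / ((-u / (mills u - u)) ^ 2 - 6 * (-u / (mills u - u)) + 6) ∧
    gfun u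
      = (-u / (mills u - u)) * (4 - (-u / (mills u - u)))
          * (1 - (-u / (mills u - u))) ^ 2
        / ((-u / (mills u - u)) ^ 2 - 6 * (-u / (mills u - u)) + 6) ^ 2 := by
  have hEpos : 0 < mills u := mills_pos u
  set E := mills u with hE
  have hd : 0 < E - u := by linarith
  set d := E - u with hdd
  set r := -u / d with hr
  have hdne : d ≠ 0 := hd.ne'
  have hud : u = -(r * d) := by rw [hr, div_mul_cancel₀ _ hdne, neg_neg]
  have hr0 : 0 < r := div_pos (by linarith) hd
  have hr1 : r < 1 := by rw [hr, div_lt_one hd]; linarith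
  have hQ : 0 < r ^ 2 - 6 * r + 6 := by nlinarith
  have hH' : d * (d ^ 2 * (r ^ 2 - 6 * r + 6) - (4 - r)) = 0 := by
    rw [hud] at hH; linear_combination hH
  have hkey : d ^ 2 * (r ^ 2 - 6 * r + 6) = 4 - r := by
    rcases mul_eq_zero.1 hH' with h | h
    · exact absurd h hdne
    · linarith
  refine ⟨⟨hr0, hr1⟩, ?_, ?_⟩
  · rw [eq_div_iff hQ.ne']; exact hkey
  · have hEu : E = d + u := by rw [hdd]; ring
    have hdr : d * r = -u := by rw [hr]; rw [mul_div_cancel₀ _ hdne]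
    have hEr : E = d * (1 - r) := by linear_combination hEu + hdr
    show E ^ 2 * (3 * E ^ 2 - 4 * u * E + u ^ 2 - 2) = _
    rw [hEr, hud, eq_div_iff (by positivity)]
    linear_combination ((1 - r) ^ 2 * (3 - 2 * r) * (d ^ 2 * (r ^ 2 - 6 * r + 6) + (4 - r))
      - 2 * (1 - r) ^ 2 * (r ^ 2 - 6 * r + 6)) * hkey
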